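/- Suppose there exist a matrix X ∈ ℂ^{(M+1)×(M+1)} and a vector y ∈ ℝ^{M+1} such that: (1) X is Hermitian positive semidefinite with all diagonal entries equal to 1; (2) C + Diag(y) is positive semidefinite; (3) (C + Diag(y))·X = 0; and (4) H†PH + Diag(y₁,…,y_M) is positive definite. Then X has rank one, and X is the unique minimizer of the SDP: for every Hermitian positive semidefinite X' ∈ ℂ^{(M+1)×(M+1)} with all diagonal entries equal to 1 and X' ≠ X, one has Re Tr(C·X') > Re Tr(C·X). -/

import Mathlib

open Matrix
open scoped ComplexOrder

/-- `P = I_{K−1} − ‖t‖⁻² t tᵀ`, regarded as a complex `(K−1)×(K−1)` matrix; it is the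
orthogonal projection onto the orthogonal complement of the time-difference vector `t`. -/
noncomputable def Pmat {K : ℕ} (t : Fin (K - 1) → ℝ) :
    Matrix (Fin (K - 1)) (Fin (K - 1)) ℂ :=
  1 - Matrix.of fun i j => (((∑ k, t k ^ 2)⁻¹ * (t i * t j) : ℝ) : ℂ)

/-- The Hermitian block matrix `C = [[H†PH, H†Pc],[c†PH, 0]] ∈ ℂ^{(M+1)×(M+1)}`, indexed by
`Fin M ⊕ Fin 1` (the last index playing the role of the homogenization coordinate). -/
noncomputable def Cmat {K M : ℕ} (H : Matrix (Fin (K - 1)) (Fin M) ℂ)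
    (c : Fin (K - 1) → ℂ) (t : Fin (K - 1) → ℝ) :
    Matrix (Fin M ⊕ Fin 1) (Fin M ⊕ Fin 1) ℂ :=
  Matrix.fromBlocks (Hᴴ * Pmat t * H)
    (Matrix.of fun i _ => (Hᴴ *ᵥ (Pmat t *ᵥ c)) i)
    (Matrix.of fun _ j => ((star c) ᵥ* (Pmat t * H)) j) 0

/-- If `S` and `Y` are positive semidefinite with `S * Y ≠ 0`, then `Re Tr(S * Y) > 0`. -/
theorem trace_re_pos_of_posSemidef_mul_ne_zero {n : Type*} [Fintype n] [DecidableEq n]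
    (S Y : Matrix n n ℂ) (hS : S.PosSemidef) (hY : Y.PosSemidef)
    (hne : S * Y ≠ 0) : 0 < (S * Y).trace.re := by
  obtain ⟨B, hB⟩ := (by open MatrixOrder in exact CStarAlgebra.nonneg_iff_eq_star_mul_self.mp hS.nonneg :
    ∃ B : Matrix n n ℂ, S = Bᴴ * B)
  obtain ⟨G, hG⟩ := (by open MatrixOrder in exact CStarAlgebra.nonneg_iff_eq_star_mul_self.mp hY.nonneg :
    ∃ B : Matrix n n ℂ, Y = Bᴴ * B)
  set W := B * Gᴴ with hW
  have hSX : S * Y = Bᴴ * W * G := by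
    rw [hB, hG, hW]; noncomm_ring
  have htr : (S * Y).trace = (Wᴴ * W).trace := by
    rw [hSX, Matrix.trace_mul_comm]
    congr 1
    rw [hW, Matrix.conjTranspose_mul, Matrix.conjTranspose_conjTranspose, Matrix.mul_assoc]
  have hre : (Wᴴ * W).trace.re = ∑ i, ∑ j, Complex.normSq (W j i) := by
    simp only [Matrix.trace, Matrix.diag, Matrix.mul_apply, Matrix.conjTranspose_apply]
    rw [Complex.re_sum]
    congr 1; funext i
    rw [Complex.re_sum]
    congr 1; funext j
    rw [Complex.star_def, ← Complex.normSq_eq_conj_mul_self, Complex.ofReal_re]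
  rw [htr, hre]
  rcases (Finset.sum_nonneg fun i _ => Finset.sum_nonneg fun j _ =>
      Complex.normSq_nonneg (W j i)).lt_or_eq with h | h
  · exact h
  · exfalso
    apply hne
    have hW0 : W = 0 := by
      ext j i
      have hz : ∑ i, ∑ j, Complex.normSq (W j i) = 0 := h.symm
      have h1 : ∀ i ∈ Finset.univ, ∑ j, Complex.normSq (W j i) = 0 := by
        intro i _
        have := (Finset.sum_eq_zero_iff_of_nonneg (fun i _ =>
          Finset.sum_nonneg fun j _ => Complex.normSq_nonneg (W j i))).mp hz
        exact this i (Finset.mem_univ i)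
      have h2 := (Finset.sum_eq_zero_iff_of_nonneg (fun j _ =>
        Complex.normSq_nonneg (W j i))).mp (h1 i (Finset.mem_univ i)) j (Finset.mem_univ j)
      simpa using Complex.normSq_eq_zero.mp h2
    rw [hSX, hW0, Matrix.mul_zero, Matrix.zero_mul]

/-- Lemma 1: sufficient conditions for the SDP relaxation to have a unique rank-one
minimizer. If `X` is feasible, `C + Diag(y)` is PSD, `(C + Diag(y))X = 0`, and
`H†PH + Diag(y_{1:M})` is positive definite, then `X` has rank one and is the unique
minimizer of the SDP. -/
theorem sdp_unique_rank_one_minimizer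
    (M K : ℕ) (hM : 1 ≤ M) (hK : 2 ≤ K)
    (H : Matrix (Fin (K - 1)) (Fin M) ℂ) (c : Fin (K - 1) → ℂ)
    (t : Fin (K - 1) → ℝ) (ht : t ≠ 0)
    (X : Matrix (Fin M ⊕ Fin 1) (Fin M ⊕ Fin 1) ℂ) (y : Fin M ⊕ Fin 1 → ℝ)
    (h1 : X.PosSemidef) (h1diag : ∀ i, X i i = 1)
    (h2 : (Cmat H c t + Matrix.diagonal fun i => (y i : ℂ)).PosSemidef)
    (h3 : (Cmat H c t + Matrix.diagonal fun i => (y i : ℂ)) * X = 0)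
    (h4 : (Hᴴ * Pmat t * H + Matrix.diagonal fun m : Fin M => (y (Sum.inl m) : ℂ)).PosDef) :
    X.rank = 1 ∧
    ∀ X' : Matrix (Fin M ⊕ Fin 1) (Fin M ⊕ Fin 1) ℂ, X'.PosSemidef → (∀ i, X' i i = 1) →
      X' ≠ X → (Cmat H c t * X).trace.re < (Cmat H c t * X').trace.re := by
  classical
  set S := Cmat H c t + Matrix.diagonal fun i => (y i : ℂ) with hSdef
  set A := Hᴴ * Pmat t * H + Matrix.diagonal fun m : Fin M => (y (Sum.inl m) : ℂ) with hAdef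
  set e : Fin M ⊕ Fin 1 := Sum.inr 0 with he
  -- block relation
  have hSA : ∀ i j, S (Sum.inl i) (Sum.inl j) = A i j := by
    intro i j
    simp [hSdef, hAdef, Cmat, Matrix.add_apply, Matrix.diagonal_apply, Sum.inl.injEq]
  -- injectivity of A
  have hAinj : ∀ z : Fin M → ℂ, A *ᵥ z = 0 → z = 0 := by
    intro z hz
    by_contra h0
    have h := h4.dotProduct_mulVec_pos h0
    rw [hz, dotProduct_zero] at h
    exact lt_irrefl 0 h
  -- kernel lemma: a kernel vector of S with vanishing last coordinate is zero
  have hker : ∀ u : (Fin M ⊕ Fin 1) → ℂ, S *ᵥ u = 0 → u e = 0 → u = 0 := by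
    intro u hu hue
    have h1' : A *ᵥ (u ∘ Sum.inl) = 0 := by
      funext i
      have h := congrFun hu (Sum.inl i)
      rw [Matrix.mulVec, dotProduct, Fintype.sum_sum_type] at h
      simp only [Fin.sum_univ_one] at h
      rw [← he] at h
      rw [hue, mul_zero, add_zero] at h
      simpa [Matrix.mulVec, dotProduct, hSA] using h
    have hz := hAinj _ h1'
    funext k
    rcases k with i | j
    · exact congrFun hz i
    · rw [Subsingleton.elim j 0]; exact hue
  set v : (Fin M ⊕ Fin 1) → ℂ := fun i => X i e with hv
  -- columns of a matrix annihilated by S are kernel vectors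
  have colker : ∀ (Z : Matrix (Fin M ⊕ Fin 1) (Fin M ⊕ Fin 1) ℂ), S * Z = 0 → ∀ j,
      S *ᵥ (fun i => Z i j) = 0 := by
    intro Z hZ j
    funext i
    have h := congrFun (congrFun hZ i) j
    simpa [Matrix.mul_apply, Matrix.mulVec, dotProduct] using h
  -- key structure lemma
  have key : ∀ (Z : Matrix (Fin M ⊕ Fin 1) (Fin M ⊕ Fin 1) ℂ), S * Z = 0 → Z.IsHermitian →
      (∀ i, Z i i = 1) → ∀ i j, Z i j = v i * star (v j) := by
    intro Z hZ hherm hdiag i j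
    have hcole : ∀ i, Z i e = v i := by
      have hd : (fun i => Z i e - v i) = 0 := by
        refine hker _ ?_ ?_
        · have hz1 := colker Z hZ e
          have hz2 := colker X h3 e
          rw [show (fun i => Z i e - v i) = (fun i => Z i e) - (fun i => X i e) from rfl,
            Matrix.mulVec_sub, hz1, hz2, sub_zero]
        · simp [hdiag e, h1diag e, hv]
      intro i
      have := congrFun hd i
      simpa [sub_eq_zero] using this
    have hd : (fun i => Z i j - star (v j) * v i) = 0 := by
      refine hker _ ?_ ?_
      · have hz1 := colker Z hZ j
        have hz2 := colker X h3 e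
        have hsc : S *ᵥ (fun i => star (v j) * v i) = 0 := by
          rw [show (fun i => star (v j) * v i) = star (v j) • (fun i => X i e) from rfl,
            Matrix.mulVec_smul, hz2, smul_zero]
        rw [show (fun i => Z i j - star (v j) * v i)
            = (fun i => Z i j) - (fun i => star (v j) * v i) from rfl,
          Matrix.mulVec_sub, hz1, hsc, sub_zero]
      · have ha : Z e j = star (Z j e) := by
          rw [← hherm.apply e j]
        have hb : v e = 1 := h1diag e
        simp [ha, hcole j, hb]
    have := congrFun hd i
    have h := sub_eq_zero.mp this
    rw [h, mul_comm]
  have hX : ∀ i j, X i j = v i * star (v j) := key X h3 h1.1 h1diag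
  have hve : v e = 1 := h1diag e
  constructor
  · -- rank one
    have hXeq : X = Matrix.vecMulVec v (star v) := by
      ext i j; rw [hX i j]; rfl
    refine le_antisymm ?_ ?_
    · rw [hXeq, Matrix.vecMulVec_eq (Fin 1)]
      calc (Matrix.replicateCol (Fin 1) v * Matrix.replicateRow (Fin 1) (star v)).rank
          ≤ (Matrix.replicateCol (Fin 1) v).rank := Matrix.rank_mul_le_left _ _
        _ ≤ Fintype.card (Fin 1) := Matrix.rank_le_card_width _
        _ = 1 := by simp
    · rw [Nat.one_le_iff_ne_zero]
      intro h0
      have hvmem : v ∈ LinearMap.range X.mulVecLin := by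
        refine ⟨Pi.single e 1, ?_⟩
        have hs : X *ᵥ Pi.single e 1 = fun i => X i e * 1 := Matrix.mulVec_single _ _ _
        rw [Matrix.mulVecLin_apply, hs]
        funext i
        rw [mul_one]
      rw [Matrix.rank] at h0
      have hbot := Submodule.finrank_eq_zero.mp h0
      rw [hbot] at hvmem
      have hv0 : v = 0 := hvmem
      rw [hv0] at hve
      simp at hve
  · -- uniqueness / strict minimality
    intro X' hX'psd hX'diag hX'ne
    have trace_eq : ∀ Z : Matrix (Fin M ⊕ Fin 1) (Fin M ⊕ Fin 1) ℂ, (∀ i, Z i i = 1) →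
        (S * Z).trace = (Cmat H c t * Z).trace + ∑ i, (y i : ℂ) := by
      intro Z hZ
      rw [hSdef, Matrix.add_mul, Matrix.trace_add]
      congr 1
      simp [Matrix.trace, Matrix.diag, Matrix.diagonal_mul, hZ]
    have hSX'ne : S * X' ≠ 0 := by
      intro hz
      apply hX'ne
      ext i j
      rw [key X' hz hX'psd.1 hX'diag i j, ← hX i j]
    have hpos : 0 < (S * X').trace.re :=
      trace_re_pos_of_posSemidef_mul_ne_zero S X' h2 hX'psd hSX'ne
    have hXtr := trace_eq X h1diag
    rw [h3, Matrix.trace_zero] at hXtr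
    have hX'tr := trace_eq X' hX'diag
    have hXre := congrArg Complex.re hXtr
    have hX're := congrArg Complex.re hX'tr
    rw [Complex.add_re] at hXre hX're
    rw [Complex.zero_re] at hXre
    linarith
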